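/- The set M = {(t_λ, t_λ) : λ ∈ Fˣ} × {1, δ} is a maximal abelian subgroup of semisimple elements of G = SL₂(F)² ⋊ ⟨δ⟩: it is abelian, and any element (f,g) ∈ SL₂(F)² commuting with all of M satisfies f = g ∈ T (the diagonal torus). -/

import Mathlib

open Matrix

/-- The matrix σ = [[0,1],[-1,0]] as an element of SL₂(F). -/
def sigmaSL (F : Type*) [Field F] : Matrix.SpecialLinearGroup (Fin 2) F :=
  ⟨!![0, 1; -1, 0], by simp [Matrix.det_fin_two_of]⟩

/-- The diagonal matrix diag(λ, λ⁻¹) as an element of SL₂(F). -/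
def torusSL (F : Type*) [Field F] (l : Fˣ) : Matrix.SpecialLinearGroup (Fin 2) F :=
  ⟨!![(l : F), 0; 0, ((l⁻¹ : Fˣ) : F)], by simp [Matrix.det_fin_two_of]⟩

/-- The diagonal torus T of SL₂(F), as a set. -/
def torusSet (F : Type*) [Field F] : Set (Matrix.SpecialLinearGroup (Fin 2) F) :=
  {g | ∃ l : Fˣ, g = torusSL F l}

/-- The swap automorphism (f,g) ↦ (g,f) of SL₂(F)². -/
def swapAut (F : Type*) [Field F] :
    MulAut (Matrix.SpecialLinearGroup (Fin 2) F × Matrix.SpecialLinearGroup (Fin 2) F) :=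
  MulEquiv.prodComm

/-- The action of ℤ₂ on SL₂(F)² whose generator acts by swapping the two factors. -/
def swapHom (F : Type*) [Field F] : Multiplicative (ZMod 2) →*
    MulAut (Matrix.SpecialLinearGroup (Fin 2) F × Matrix.SpecialLinearGroup (Fin 2) F) where
  toFun x := if x.toAdd = 0 then 1 else swapAut F
  map_one' := by simp
  map_mul' x y := by
    have h : ∀ z : ZMod 2, z = 0 ∨ z = 1 := by decide
    have hswap : swapAut F * swapAut F = 1 := rfl
    have h11 : (1 + 1 : ZMod 2) = 0 := by decide
    have h10 : (1 : ZMod 2) ≠ 0 := by decide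
    rcases h x.toAdd with hx | hx <;> rcases h y.toAdd with hy | hy <;>
      simp_all [toAdd_mul, hx, hy, h11, h10]

/-- The group G = SL₂(F)² ⋊ ℤ₂, with the generator of ℤ₂ acting by swapping factors. -/
abbrev GrpG (F : Type*) [Field F] :=
  SemidirectProduct (Matrix.SpecialLinearGroup (Fin 2) F × Matrix.SpecialLinearGroup (Fin 2) F)
    (Multiplicative (ZMod 2)) (swapHom F)

/-- The element δ ∈ G generating the ℤ₂ factor. -/
def deltaG (F : Type*) [Field F] : GrpG F :=
  SemidirectProduct.inr (Multiplicative.ofAdd (1 : ZMod 2))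

/-- t_{λ,μ} = (t_λ, t_μ) viewed inside G. -/
def tPair (F : Type*) [Field F] (l m : Fˣ) : GrpG F :=
  SemidirectProduct.inl (torusSL F l, torusSL F m)

/-- The set M = {(t_λ,t_λ)} × {1, δ} ⊆ G = SL₂(F)² ⋊ ℤ₂. -/
def MSet (F : Type*) [Field F] : Set (GrpG F) :=
  {w | ∃ l : Fˣ, w = tPair F l l ∨ w = tPair F l l * deltaG F}


section Aux
variable {F : Type*} [Field F]

lemma torusSL_comm (l m : Fˣ) : torusSL F l * torusSL F m = torusSL F m * torusSL F l := by
  apply Subtype.ext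
  rw [Matrix.SpecialLinearGroup.coe_mul, Matrix.SpecialLinearGroup.coe_mul]
  simp [torusSL, Matrix.SpecialLinearGroup.coe_mul, Matrix.mul_fin_two]
  rw [mul_comm (l:F) m, mul_comm ((l:F))⁻¹]
  exact ⟨rfl, rfl⟩

lemma torusSL_one : torusSL F 1 = 1 := by
  apply Subtype.ext
  simp [torusSL]
  ext i j
  fin_cases i <;> fin_cases j <;> simp [Matrix.one_apply]

lemma swapHom_delta : swapHom F (Multiplicative.ofAdd (1 : ZMod 2)) = swapAut F := by
  simp [swapHom]

lemma delta_inl (a : Matrix.SpecialLinearGroup (Fin 2) F × Matrix.SpecialLinearGroup (Fin 2) F) :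
    deltaG F * SemidirectProduct.inl a = SemidirectProduct.inl (a.2, a.1) * deltaG F := by
  have h := SemidirectProduct.inl_aut (φ := swapHom F)
    (Multiplicative.ofAdd (1 : ZMod 2)) a
  have h2 : (swapHom F (Multiplicative.ofAdd (1 : ZMod 2))) a = (a.2, a.1) := by
    rw [swapHom_delta]; rfl
  rw [h2, _root_.map_inv] at h
  calc deltaG F * SemidirectProduct.inl a
      = (deltaG F * SemidirectProduct.inl a * (deltaG F)⁻¹) * deltaG F := by group
    _ = SemidirectProduct.inl (a.2, a.1) * deltaG F := by
        rw [show deltaG F = SemidirectProduct.inr (Multiplicative.ofAdd (1 : ZMod 2)) from rfl, ← h]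

lemma delta_tPair (l : Fˣ) : deltaG F * tPair F l l = tPair F l l * deltaG F := by
  rw [tPair, delta_inl]

lemma delta_sq : deltaG F * deltaG F = 1 := by
  rw [deltaG, ← _root_.map_mul]
  have : (Multiplicative.ofAdd (1 : ZMod 2)) * (Multiplicative.ofAdd (1 : ZMod 2)) = 1 := by decide
  rw [this, _root_.map_one]

lemma tPair_comm (l m : Fˣ) : tPair F l l * tPair F m m = tPair F m m * tPair F l l := by
  rw [tPair, tPair, ← _root_.map_mul, ← _root_.map_mul, Prod.mk_mul_mk, Prod.mk_mul_mk,
    torusSL_comm]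

end Aux

/-- M is abelian, and any (f,g) ∈ SL₂(F)² commuting with all of M satisfies
f = g ∈ T, the diagonal torus. -/
theorem MSet_maximal_abelian {F : Type*} [Field F] [IsAlgClosed F] [CharZero F] :
    (∀ a ∈ MSet F, ∀ b ∈ MSet F, a * b = b * a) ∧
    (∀ f g : Matrix.SpecialLinearGroup (Fin 2) F,
      (∀ w ∈ MSet F, w * SemidirectProduct.inl (f, g) =
        SemidirectProduct.inl (f, g) * w) →
      f = g ∧ f ∈ torusSet F) := by
  constructor
  · rintro a ⟨l, hl | hl⟩ b ⟨m, hm | hm⟩ <;> subst hl hm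
    · exact tPair_comm l m
    · rw [← mul_assoc, tPair_comm, mul_assoc, ← delta_tPair, ← mul_assoc]
    · rw [mul_assoc, delta_tPair, ← mul_assoc, tPair_comm, mul_assoc]
    · have e : ∀ p q : Fˣ, tPair F p p * deltaG F * (tPair F q q * deltaG F)
          = tPair F p p * tPair F q q := by
        intro p q
        rw [mul_assoc, ← mul_assoc (deltaG F), delta_tPair, mul_assoc, delta_sq,
          mul_one]
      rw [e, e, tPair_comm]
  · intro f g hcomm
    -- From commuting with δ = tPair 1 1 * δ : f = g
    have hδ : deltaG F ∈ MSet F := by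
      refine ⟨1, Or.inr ?_⟩
      rw [tPair, torusSL_one]
      simp
      exact _root_.map_one _
    have h1 := hcomm _ hδ
    rw [delta_inl] at h1
    have h1' : (SemidirectProduct.inl (g, f) : GrpG F) = SemidirectProduct.inl (f, g) := by
      have := mul_right_cancel h1
      exact this
    have hfg : f = g := (Prod.mk.injEq _ _ _ _ ▸ (SemidirectProduct.inl_injective h1')).2
    refine ⟨hfg, ?_⟩
    -- f commutes with torusSL F 2
    set u : Fˣ := Units.mk0 (2 : F) two_ne_zero with hu
    have h2 := hcomm (tPair F u u) ⟨u, Or.inl rfl⟩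
    rw [tPair, ← _root_.map_mul, ← _root_.map_mul, Prod.mk_mul_mk, Prod.mk_mul_mk] at h2
    have h3 : torusSL F u * f = f * torusSL F u :=
      (Prod.mk.injEq _ _ _ _ ▸ (SemidirectProduct.inl_injective h2)).1
    have h4 : (torusSL F u : Matrix (Fin 2) (Fin 2) F) * f = (f : Matrix (Fin 2) (Fin 2) F) * torusSL F u := by
      rw [← Matrix.SpecialLinearGroup.coe_mul, ← Matrix.SpecialLinearGroup.coe_mul, h3]
    have hu2 : ((u : F)) = 2 := rfl
    have hui : (((u⁻¹ : Fˣ)) : F) = 2⁻¹ := rfl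
    have e01 : (f : Matrix (Fin 2) (Fin 2) F) 0 1 = 0 := by
      have := Matrix.ext_iff.mpr h4 0 1
      simp [torusSL, Matrix.mul_apply, Fin.sum_univ_two, hu2, hui] at this
      have h32 : (2 : F) - 2⁻¹ ≠ 0 := by
        intro h
        have : (2 : F) * (2 : F) = 1 := by
          field_simp at h
          linear_combination h
        norm_num at this
      have : ((2 : F) - 2⁻¹) * (f : Matrix (Fin 2) (Fin 2) F) 0 1 = 0 := by
        ring_nf
        linear_combination this
      exact (mul_eq_zero.mp this).resolve_left h32
    have e10 : (f : Matrix (Fin 2) (Fin 2) F) 1 0 = 0 := by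
      have := Matrix.ext_iff.mpr h4 1 0
      simp [torusSL, Matrix.mul_apply, Fin.sum_univ_two, hu2, hui] at this
      have h32 : (2 : F) - 2⁻¹ ≠ 0 := by
        intro h
        have : (2 : F) * (2 : F) = 1 := by
          field_simp at h
          linear_combination h
        norm_num at this
      have : ((2 : F) - 2⁻¹) * (f : Matrix (Fin 2) (Fin 2) F) 1 0 = 0 := by
        ring_nf
        linear_combination -this
      exact (mul_eq_zero.mp this).resolve_left h32
    have hdet : (f : Matrix (Fin 2) (Fin 2) F) 0 0 * (f : Matrix (Fin 2) (Fin 2) F) 1 1 = 1 := by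
      have := f.2
      rw [Matrix.det_fin_two] at this
      rw [e01] at this
      simpa using this
    have ha : (f : Matrix (Fin 2) (Fin 2) F) 0 0 ≠ 0 := by
      intro h; rw [h, zero_mul] at hdet; exact zero_ne_one hdet
    refine ⟨Units.mk0 _ ha, ?_⟩
    apply Subtype.ext
    ext i j
    fin_cases i <;> fin_cases j <;>
      simp [torusSL, e01, e10]
    exact eq_inv_of_mul_eq_one_left (by rw [mul_comm]; exact hdet)
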